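/- The new filter choice ψ_E(z) = sinc(z)² satisfies the multifrequency filter condition (33e) with constant C₁₃ = 1: for every real z, |sinc(z)² − (1/2)·(cos z + 1)·sinc(z/2)²·cos z| ≤ |sin z · sin(z/2)|. Equivalently, using (1/2)(cos z + 1)·sinc(z/2)² = sinc(z)², one has sinc(z)²·|1 − cos z| ≤ |sin z · sin(z/2)|. -/

import Mathlib

noncomputable def sinc (z : ℝ) : ℝ := if z = 0 then 1 else Real.sin z / z

lemma sinc_key (z : ℝ) : (1/2) * (Real.cos z + 1) * (sinc (z/2))^2 = (sinc z)^2 := by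
  by_cases hz : z = 0
  · norm_num [sinc, hz]
  · have hz2 : z / 2 ≠ 0 := by positivity
    simp only [sinc, if_neg hz, if_neg hz2]
    have hc : Real.cos (z/2) ^ 2 = 1 / 2 + Real.cos z / 2 := by
      have := Real.cos_sq (z/2)
      rwa [show 2 * (z/2) = z by ring] at this
    have hs : Real.sin z = 2 * Real.sin (z/2) * Real.cos (z/2) := by
      have := Real.sin_two_mul (z/2)
      rwa [show 2 * (z/2) = z by ring] at this
    field_simp
    linear_combination (-(Real.sin z + 2*Real.sin (z/2)*Real.cos (z/2))) * hs
      + (-4*Real.sin (z/2)^2) * hc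

lemma sinc_bound (z : ℝ) :
    (sinc z)^2 * |1 - Real.cos z| ≤ |Real.sin z * Real.sin (z/2)| := by
  by_cases hz : z = 0
  · simp [sinc, hz]
  · have h1 : |1 - Real.cos z| = 2 * Real.sin (z/2) ^ 2 := by
      have h := Real.sin_sq_eq_half_sub (z/2)
      rw [show 2*(z/2) = z by ring] at h
      rw [abs_of_nonneg (by nlinarith [Real.cos_le_one z])]
      linarith
    rw [h1, abs_mul]
    simp only [sinc, if_neg hz]
    have ha : |Real.sin z| ≤ |z| := Real.abs_sin_le_abs
    have hb : |Real.sin (z/2)| ≤ |z| / 2 := by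
      have := Real.abs_sin_le_abs (x := z/2)
      rwa [abs_div, abs_two] at this
    have hz2 : (0:ℝ) < z^2 := by positivity
    have habs : |z|^2 = z^2 := sq_abs z
    have h2 : Real.sin z ^ 2 = |Real.sin z|^2 := (sq_abs _).symm
    have h3 : Real.sin (z/2) ^ 2 = |Real.sin (z/2)|^2 := (sq_abs _).symm
    rw [div_pow, h2, h3]
    rw [div_mul_eq_mul_div, div_le_iff₀ hz2]
    have hab : |Real.sin z| * |Real.sin (z/2)| ≤ z^2/2 := by
      have := mul_le_mul ha hb (abs_nonneg _) (abs_nonneg _)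
      nlinarith
    have hpos : 0 ≤ |Real.sin z| * |Real.sin (z/2)| :=
      mul_nonneg (abs_nonneg _) (abs_nonneg _)
    nlinarith [mul_le_mul_of_nonneg_left hab hpos]

/-- the new filter choice `ψ_E(z) = sinc(z)²` satisfies the
multifrequency filter condition (33e) with constant `C₁₃ = 1`:
`|sinc(z)² − (1/2)·(cos z + 1)·sinc(z/2)²·cos z| ≤ |sin z · sin(z/2)|` for all real
`z`; equivalently `sinc(z)²·|1 − cos z| ≤ |sin z · sin(z/2)|`. -/
theorem stmt18 (z : ℝ) :
    |(sinc z)^2 - (1/2) * (Real.cos z + 1) * (sinc (z/2))^2 * Real.cos z|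
      ≤ |Real.sin z * Real.sin (z/2)| ∧
    (sinc z)^2 * |1 - Real.cos z| ≤ |Real.sin z * Real.sin (z/2)| := by
  have key : (sinc z)^2 - (1/2) * (Real.cos z + 1) * (sinc (z/2))^2 * Real.cos z
      = (sinc z)^2 * (1 - Real.cos z) := by
    linear_combination (-Real.cos z) * (sinc_key z)
  refine ⟨?_, sinc_bound z⟩
  rw [key, abs_mul, abs_of_nonneg (sq_nonneg (sinc z))]
  exact sinc_bound z
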